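/- Scalar version of Theorem 2.2 lower bound: let μ be a probability measure on [m,M] ⊂ (0,∞), f : [m,M] → (0,∞) twice differentiable with α ≤ f'', and K = max_{t∈[m,M]} L(t)/f(t) where L is the secant line of f. Then f(∫t dμ) ≥ (1/K)·(∫f dμ + (α/2)·((M+m)∫t dμ - Mm - ∫t² dμ)). -/

import Mathlib

open MeasureTheory

/-- Scalar version of the Theorem 2.2 lower bound: for a probability measure `μ`
supported in `[m, M] ⊂ (0, ∞)`, a positive twice differentiable `f` with `α ≤ f''`
on `[m, M]`, and `K = sup {L t / f t : t ∈ [m, M]}` (the secant line constant),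
`f (∫ t ∂μ) ≥ (1/K) * (∫ f ∂μ + (α/2) ((M+m) ∫ t ∂μ - M m - ∫ t² ∂μ))`. -/
theorem scalar_CDJ_ratio_lower_bound (m M α : ℝ) (hm : 0 < m) (hmM : m < M)
    (μ : Measure ℝ) [IsProbabilityMeasure μ] (hsupp : μ (Set.Icc m M)ᶜ = 0)
    (f : ℝ → ℝ) (hpos : ∀ x ∈ Set.Icc m M, 0 < f x)
    (hf : ∀ x, HasDerivAt f (deriv f x) x)
    (hf' : ∀ x, HasDerivAt (deriv f) (deriv (deriv f) x) x)
    (hα : ∀ x ∈ Set.Icc m M, α ≤ deriv (deriv f) x)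
    (K : ℝ)
    (hK : IsGreatest ((fun t => (((M - t) / (M - m)) * f m + ((t - m) / (M - m)) * f M) / f t)
      '' Set.Icc m M) K) :
    (1 / K) * ((∫ t, f t ∂μ)
        + (α / 2) * ((M + m) * (∫ t, t ∂μ) - M * m - (∫ t, t ^ 2 ∂μ)))
      ≤ f (∫ t, t ∂μ) := by
  have hMm : (0:ℝ) < M - m := by linarith
  have hae : ∀ᵐ x ∂μ, x ∈ Set.Icc m M := by
    rw [ae_iff]
    exact hsupp
  -- continuity of f
  have hfc : Continuous f := continuous_iff_continuousAt.mpr fun x => (hf x).continuousAt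
  -- a generic integrability lemma: continuous functions are μ-integrable
  have hint : ∀ g : ℝ → ℝ, Continuous g → Integrable g μ := by
    intro g hg
    obtain ⟨C, hC⟩ := (isCompact_Icc : IsCompact (Set.Icc m M)).exists_bound_of_continuousOn
      hg.continuousOn
    refine (integrable_const C).mono' hg.aestronglyMeasurable ?_
    filter_upwards [hae] with x hx
    exact hC x hx
  have hint_f : Integrable f μ := hint f hfc
  have hint_id : Integrable (fun t : ℝ => t) μ := hint _ continuous_id
  have hint_sq : Integrable (fun t : ℝ => t ^ 2) μ := hint _ (continuous_pow 2)
  set tb := ∫ t, t ∂μ with htb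
  -- tb ∈ [m, M]
  have htbmem : tb ∈ Set.Icc m M := by
    constructor
    · have : ∫ (_ : ℝ), m ∂μ ≤ ∫ t, t ∂μ := by
        refine integral_mono_ae (integrable_const m) hint_id ?_
        filter_upwards [hae] with x hx using hx.1
      simpa using this
    · have : ∫ t, t ∂μ ≤ ∫ (_ : ℝ), M ∂μ := by
        refine integral_mono_ae hint_id (integrable_const M) ?_
        filter_upwards [hae] with x hx using hx.2
      simpa using this
  -- secant line L and the perturbed function g
  set L : ℝ → ℝ := fun t => ((M - t) / (M - m)) * f m + ((t - m) / (M - m)) * f M with hL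
  set g : ℝ → ℝ := fun t => f t + α / 2 * ((M + m) * t - M * m - t ^ 2) with hgdef
  have hLc : Continuous L := by
    unfold L; fun_prop
  have hgc : Continuous g := by
    unfold g
    exact hfc.add (by fun_prop)
  -- derivatives of g
  have hp : ∀ x : ℝ, HasDerivAt (fun t => α / 2 * ((M + m) * t - M * m - t ^ 2))
      (α / 2 * ((M + m) - 2 * x)) x := by
    intro x
    have h1 : HasDerivAt (fun t : ℝ => (M + m) * t - M * m - t ^ 2) ((M + m) - 2 * x) x := by
      have := (((hasDerivAt_id x).const_mul (M + m)).sub_const (M * m)).sub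
        (hasDerivAt_pow 2 x)
      exact this.congr_deriv (by norm_num)
    exact h1.const_mul (α / 2)
  have hg1 : ∀ x : ℝ, HasDerivAt g (deriv f x + α / 2 * ((M + m) - 2 * x)) x :=
    fun x => (hf x).add (hp x)
  have hg2 : ∀ x : ℝ, HasDerivAt (fun x => deriv f x + α / 2 * ((M + m) - 2 * x))
      (deriv (deriv f) x - α) x := by
    intro x
    have h0 : HasDerivAt (fun t : ℝ => α / 2 * ((M + m) - 2 * t)) (α / 2 * (0 - 2 * 1)) x :=
      ((hasDerivAt_const x (M + m)).sub ((hasDerivAt_id x).const_mul 2)).const_mul (α / 2)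
    have h1 : HasDerivAt (fun t : ℝ => α / 2 * ((M + m) - 2 * t)) (-α) x := by
      convert h0 using 1; ring
    have h2 := (hf' x).add h1
    have : deriv (deriv f) x - α = deriv (deriv f) x + -α := by ring
    rw [this]
    exact h2
  -- convexity of g on [m, M]
  have hconv : ConvexOn ℝ (Set.Icc m M) g := by
    refine convexOn_of_hasDerivWithinAt2_nonneg (convex_Icc m M) hgc.continuousOn
      (f' := fun x => deriv f x + α / 2 * ((M + m) - 2 * x))
      (f'' := fun x => deriv (deriv f) x - α)
      (fun x hx => (hg1 x).hasDerivWithinAt) (fun x hx => (hg2 x).hasDerivWithinAt) ?_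
    intro x hx
    rw [interior_Icc] at hx
    have := hα x (Set.mem_Icc_of_Ioo hx)
    linarith
  -- pointwise: g ≤ L on [m, M]
  have hptwise : ∀ x ∈ Set.Icc m M, g x ≤ L x := by
    intro x hx
    have ha : (0:ℝ) ≤ (M - x) / (M - m) := div_nonneg (by linarith [hx.2]) hMm.le
    have hb : (0:ℝ) ≤ (x - m) / (M - m) := div_nonneg (by linarith [hx.1]) hMm.le
    have hab : (M - x) / (M - m) + (x - m) / (M - m) = 1 := by
      field_simp
      ring
    have hcomb := hconv.2 (Set.left_mem_Icc.mpr hmM.le) (Set.right_mem_Icc.mpr hmM.le)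
      ha hb hab
    have hne : (M - m) ≠ 0 := hMm.ne'
    have hx' : ((M - x) / (M - m)) • m + ((x - m) / (M - m)) • M = x := by
      rw [smul_eq_mul, smul_eq_mul]
      field_simp
      ring
    rw [hx'] at hcomb
    have hm0 : g m = f m := by
      show f m + α / 2 * ((M + m) * m - M * m - m ^ 2) = f m; ring
    have hM0 : g M = f M := by
      show f M + α / 2 * ((M + m) * M - M * m - M ^ 2) = f M; ring
    calc g x ≤ ((M - x) / (M - m)) • g m + ((x - m) / (M - m)) • g M := hcomb
      _ = L x := by rw [hm0, hM0]; simp [hL, smul_eq_mul]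
  -- integrate
  have hintineq : ∫ t, g t ∂μ ≤ ∫ t, L t ∂μ := by
    refine integral_mono_ae (hint g hgc) (hint L hLc) ?_
    filter_upwards [hae] with x hx using hptwise x hx
  -- ∫ L = L tb
  have hLlin : ∀ x : ℝ, L x = (M * f m - m * f M) / (M - m) + (f M - f m) / (M - m) * x := by
    intro x
    unfold L
    field_simp
    ring
  have hintL : ∫ t, L t ∂μ = L tb := by
    have : ∫ t, L t ∂μ
        = ∫ t, ((M * f m - m * f M) / (M - m) + (f M - f m) / (M - m) * t) ∂μ := by
      congr 1; funext t; exact hLlin t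
    rw [this, integral_add (integrable_const _) (hint_id.const_mul _),
      integral_const, integral_const_mul, hLlin tb]
    simp [htb]
  -- ∫ g = ∫ f + (α/2)(...)
  have hintg : ∫ t, g t ∂μ = (∫ t, f t ∂μ)
      + α / 2 * ((M + m) * tb - M * m - ∫ t, t ^ 2 ∂μ) := by
    have i1 : Integrable (fun a : ℝ => (M + m) * a - M * m) μ := hint _ (by fun_prop)
    have i2 : Integrable (fun a : ℝ => (M + m) * a - M * m - a ^ 2) μ := hint _ (by fun_prop)
    unfold g
    rw [integral_add hint_f (i2.const_mul _)]
    congr 1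
    rw [integral_const_mul]
    congr 1
    rw [integral_sub i1 hint_sq, integral_sub (hint_id.const_mul _) (integrable_const _),
      integral_const_mul, integral_const]
    simp [htb]
  -- K bounds
  have hfpos : 0 < f tb := hpos tb htbmem
  have hKge : L tb / f tb ≤ K := hK.2 ⟨tb, htbmem, rfl⟩
  have hK1 : (1:ℝ) ≤ K := by
    have hmem : (1:ℝ) ∈ ((fun t => (((M - t) / (M - m)) * f m + ((t - m) / (M - m)) * f M) / f t)
        '' Set.Icc m M) := by
      refine ⟨m, Set.left_mem_Icc.mpr hmM.le, ?_⟩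
      have hfm : f m ≠ 0 := (hpos m (Set.left_mem_Icc.mpr hmM.le)).ne'
      show (((M - m) / (M - m)) * f m + ((m - m) / (M - m)) * f M) / f m = 1
      rw [div_self hMm.ne', sub_self, zero_div, one_mul, zero_mul, add_zero, div_self hfm]
    exact hK.2 hmem
  have hKpos : (0:ℝ) < K := lt_of_lt_of_le one_pos hK1
  have hLK : L tb ≤ K * f tb := by
    have := (div_le_iff₀ hfpos).mp hKge
    linarith [this]
  -- finish
  have hchain : (∫ t, f t ∂μ) + α / 2 * ((M + m) * tb - M * m - ∫ t, t ^ 2 ∂μ)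
      ≤ K * f tb := by
    rw [← hintg]
    calc ∫ t, g t ∂μ ≤ ∫ t, L t ∂μ := hintineq
      _ = L tb := hintL
      _ ≤ K * f tb := hLK
  rw [div_mul_eq_mul_div, div_le_iff₀ hKpos]
  calc 1 * ((∫ t, f t ∂μ) + α / 2 * ((M + m) * tb - M * m - ∫ t, t ^ 2 ∂μ))
      = (∫ t, f t ∂μ) + α / 2 * ((M + m) * tb - M * m - ∫ t, t ^ 2 ∂μ) := one_mul _
    _ ≤ K * f tb := hchain
    _ = f tb * K := mul_comm _ _
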